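/- arXiv:quant-ph/0407223 — 6 statements merged into one kernel-verified Lean document; each statement's English description precedes it below -/
import Mathlib

section
/- Let G be a simple graph on d vertices {0,…,d−1}. Any d×d unitary matrix with all entries nonzero can be reduced to diagonal form by left-multiplication by Givens rotations acting only on pairs (j,k) that are edges of G only if G is connected. Conversely (necessity direction): if G is disconnected, there exists a unitary matrix U with no zero entries that cannot be reduced to diagonal form using only rotations on edges of G. -/
open Matrix

/-- `A` is a Givens rotation acting on the coordinate plane `(j,k)`: a unitary
matrix equal to the identity outside rows/columns `j,k`. -/
def IsGivensOn {d : ℕ} (j k : Fin d) (A : Matrix (Fin d) (Fin d) ℂ) : Prop :=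
  A ∈ Matrix.unitaryGroup (Fin d) ℂ ∧
    ∀ p q : Fin d, (p ∉ ({j, k} : Set (Fin d)) ∨ q ∉ ({j, k} : Set (Fin d))) →
      A p q = if p = q then 1 else 0

/-- `U` can be reduced to diagonal form by left multiplication by Givens rotations
on planes which are edges of the coupling graph `G`. -/
def ReducibleByGivens {d : ℕ} (G : SimpleGraph (Fin d))
    (U : Matrix (Fin d) (Fin d) ℂ) : Prop :=
  ∃ L : List (Matrix (Fin d) (Fin d) ℂ),
    (∀ A ∈ L, ∃ j k : Fin d, G.Adj j k ∧ IsGivensOn j k A) ∧ (L.prod * U).IsDiag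

/-- Auxiliary block-structure predicate: `A p q = 0` whenever `p` and `q` lie in
different connected components of `G`. -/
def BlkAux {d : ℕ} (G : SimpleGraph (Fin d)) (A : Matrix (Fin d) (Fin d) ℂ) : Prop :=
  ∀ p q : Fin d, ¬ G.Reachable p q → A p q = 0

lemma blkAux_one {d : ℕ} (G : SimpleGraph (Fin d)) : BlkAux G 1 := by
  intro p q h
  have hpq : p ≠ q := by rintro rfl; exact h (SimpleGraph.Reachable.refl p)
  simp [Matrix.one_apply, hpq]

lemma blkAux_mul {d : ℕ} (G : SimpleGraph (Fin d)) {A B : Matrix (Fin d) (Fin d) ℂ}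
    (hA : BlkAux G A) (hB : BlkAux G B) : BlkAux G (A * B) := by
  intro p q h
  rw [Matrix.mul_apply]
  apply Finset.sum_eq_zero
  intro r _
  by_cases hpr : G.Reachable p r
  · have : ¬ G.Reachable r q := fun hrq => h (hpr.trans hrq)
    rw [hB r q this, mul_zero]
  · rw [hA p r hpr, zero_mul]

lemma blkAux_listProd {d : ℕ} (G : SimpleGraph (Fin d))
    (L : List (Matrix (Fin d) (Fin d) ℂ)) (hL : ∀ A ∈ L, BlkAux G A) :
    BlkAux G L.prod := by
  induction L with
  | nil => simpa using blkAux_one G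
  | cons A L ih =>
      rw [List.prod_cons]
      exact blkAux_mul G (hL A List.mem_cons_self)
        (ih fun B hB => hL B (List.mem_cons_of_mem A hB))

lemma blkAux_star {d : ℕ} (G : SimpleGraph (Fin d)) {A : Matrix (Fin d) (Fin d) ℂ}
    (hA : BlkAux G A) : BlkAux G (star A) := by
  intro p q h
  have : ¬ G.Reachable q p := fun hqp => h hqp.symm
  simp [Matrix.star_apply, hA q p this]

lemma blkAux_givens {d : ℕ} (G : SimpleGraph (Fin d)) {j k : Fin d}
    {A : Matrix (Fin d) (Fin d) ℂ} (hjk : G.Adj j k) (hA : IsGivensOn j k A) :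
    BlkAux G A := by
  intro p q h
  have hpq : p ≠ q := by rintro rfl; exact h (SimpleGraph.Reachable.refl p)
  by_cases hp : p ∈ ({j, k} : Set (Fin d))
  · by_cases hq : q ∈ ({j, k} : Set (Fin d))
    · -- both in {j,k}, p ≠ q, so {p,q} = {j,k} and they are adjacent, hence reachable
      exfalso
      rcases hp with rfl | rfl <;> rcases hq with rfl | rfl
      · exact hpq rfl
      · exact h hjk.reachable
      · exact h hjk.symm.reachable
      · exact hpq rfl
    · rw [hA.2 p q (Or.inr hq), if_neg hpq]
  · rw [hA.2 p q (Or.inl hp), if_neg hpq]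

lemma listProd_mem_unitary {d : ℕ} (L : List (Matrix (Fin d) (Fin d) ℂ))
    (hL : ∀ A ∈ L, A ∈ Matrix.unitaryGroup (Fin d) ℂ) :
    L.prod ∈ Matrix.unitaryGroup (Fin d) ℂ := by
  induction L with
  | nil => simpa using (one_mem (Matrix.unitaryGroup (Fin d) ℂ))
  | cons A L ih =>
      rw [List.prod_cons]
      exact mul_mem (hL A List.mem_cons_self)
        (ih fun B hB => hL B (List.mem_cons_of_mem A hB))

/-- Reduction of every nowhere-zero unitary to diagonal form using only rotations
on edges of `G` is possible only if `G` is connected; conversely, if `G` is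
disconnected there is a nowhere-zero unitary that cannot be so reduced. -/
theorem coupling_graph_connected_necessary (d : ℕ) (hd : 0 < d)
    (G : SimpleGraph (Fin d)) :
    ((∀ U : Matrix (Fin d) (Fin d) ℂ, U ∈ Matrix.unitaryGroup (Fin d) ℂ →
        (∀ i j : Fin d, U i j ≠ 0) → ReducibleByGivens G U) → G.Connected) ∧
    (¬ G.Connected → ∃ U : Matrix (Fin d) (Fin d) ℂ,
        U ∈ Matrix.unitaryGroup (Fin d) ℂ ∧ (∀ i j : Fin d, U i j ≠ 0) ∧
        ¬ ReducibleByGivens G U) := by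
  have main : ¬ G.Connected → ∃ U : Matrix (Fin d) (Fin d) ℂ,
      U ∈ Matrix.unitaryGroup (Fin d) ℂ ∧ (∀ i j : Fin d, U i j ≠ 0) ∧
      ¬ ReducibleByGivens G U := by
    intro hG
    -- get two non-reachable vertices
    have hne : Nonempty (Fin d) := ⟨⟨0, hd⟩⟩
    have hpre : ¬ G.Preconnected := by
      intro hp; exact hG ((SimpleGraph.connected_iff G).2 ⟨hp, hne⟩)
    rw [SimpleGraph.Preconnected] at hpre
    push_neg at hpre
    obtain ⟨u, v, huv⟩ := hpre
    -- the nowhere-zero unitary U = I - ((1+i)/d) J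
    set c : ℂ := (1 + Complex.I) / d with hc
    have hd' : (d:ℂ) ≠ 0 := Nat.cast_ne_zero.2 hd.ne'
    set U : Matrix (Fin d) (Fin d) ℂ :=
      Matrix.of (fun p q => (if p = q then 1 else 0) - c) with hU
    have hcc : (starRingEnd ℂ) c = (1 - Complex.I) / d := by
      rw [hc, map_div₀, map_add, _root_.map_one, Complex.conj_I, Complex.conj_natCast]
      ring
    have key : ∀ p q : Fin d,
        (∑ r, ((if p = r then (1:ℂ) else 0) - c) *
          (starRingEnd ℂ) ((if q = r then 1 else 0) - c))
          = if p = q then 1 else 0 := by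
      intro p q
      have step : ∀ r : Fin d, ((if p = r then (1:ℂ) else 0) - c) *
          (starRingEnd ℂ) ((if q = r then 1 else 0) - c)
          = ((if p = r then (if q = r then (1:ℂ) else 0) else 0)
            - (if p = r then (starRingEnd ℂ) c else 0))
            - ((if q = r then c else 0) - c * (starRingEnd ℂ) c) := by
        intro r
        have h1 : (starRingEnd ℂ) ((if q = r then (1:ℂ) else 0) - c)
            = (if q = r then (1:ℂ) else 0) - (starRingEnd ℂ) c := by
          rw [map_sub]; congr 1; split_ifs
          exacts [_root_.map_one _, map_zero _]
        rw [h1]; split_ifs <;> ring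
      rw [Finset.sum_congr rfl (fun r _ => step r)]
      simp only [Finset.sum_sub_distrib, Finset.sum_ite_eq, Finset.mem_univ, if_true,
        Finset.sum_const, Finset.card_univ, Fintype.card_fin, nsmul_eq_mul, hcc, hc]
      by_cases h : p = q
      · subst h; simp; field_simp; ring_nf; rw [Complex.I_sq]; ring
      · simp [h, Ne.symm h]; field_simp; ring_nf; rw [Complex.I_sq]; ring
    have hUmem : U ∈ Matrix.unitaryGroup (Fin d) ℂ := by
      rw [Matrix.mem_unitaryGroup_iff]
      ext p q
      rw [Matrix.mul_apply, Matrix.one_apply]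
      simpa [hU, Matrix.star_apply] using key p q
    have hUnz : ∀ i j : Fin d, U i j ≠ 0 := by
      intro i j h
      rw [hU] at h
      simp only [Matrix.of_apply] at h
      by_cases hij : i = j
      · rw [if_pos hij, sub_eq_zero, hc] at h
        field_simp at h
        have := congrArg Complex.im h
        simp at this
      · rw [if_neg hij, zero_sub, neg_eq_zero, hc, div_eq_zero_iff] at h
        rcases h with h | h
        · have := congrArg Complex.im h
          simp at this
        · exact hd' h
    refine ⟨U, hUmem, hUnz, ?_⟩
    rintro ⟨L, hL, hdiag⟩
    set P := L.prod with hP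
    have hPmem : P ∈ Matrix.unitaryGroup (Fin d) ℂ :=
      listProd_mem_unitary L (fun A hA => (hL A hA).choose_spec.choose_spec.2.1)
    have hPblk : BlkAux G P := by
      apply blkAux_listProd
      intro A hA
      obtain ⟨j, k, hjk, hg⟩ := hL A hA
      exact blkAux_givens G hjk hg
    -- U = star P * (P * U)
    have hsP : star P * P = 1 := (Matrix.mem_unitaryGroup_iff'.1 hPmem)
    have hUeq : U = star P * (P * U) := by
      rw [← Matrix.mul_assoc, hsP, Matrix.one_mul]
    have : U u v = 0 := by
      rw [hUeq, Matrix.mul_apply]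
      apply Finset.sum_eq_zero
      intro r _
      by_cases hrv : r = v
      · have hn : ¬ G.Reachable r u := by rw [hrv]; exact fun h => huv h.symm
        rw [Matrix.star_apply, hPblk r u hn, star_zero, zero_mul]
      · rw [hdiag hrv, mul_zero]
    exact hUnz u v this
  refine ⟨?_, main⟩
  intro h
  by_contra hc
  obtain ⟨U, h1, h2, h3⟩ := main hc
  exact h3 (h U h1 h2)
end

section
/- If the coupling graph G on d vertices is connected, then any d×d unitary matrix U can be brought to diagonal form using at most d(d−1)/2 Givens rotations on planes corresponding to edges of G. -/
open Matrix

lemma givens_exists {d : ℕ} (x w : Fin d) (hxw : x ≠ w) (u : Fin d → ℂ) :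
    ∃ A : Matrix (Fin d) (Fin d) ℂ, IsGivensOn x w A ∧ (A.mulVec u) w = 0 ∧
      ∀ p, p ≠ x → p ≠ w → A.mulVec u p = u p := by
  set a := u x with ha
  set b := u w with hb
  by_cases h0 : a = 0 ∧ b = 0
  · refine ⟨1, ⟨one_mem _, fun p q _ => Matrix.one_apply⟩, ?_, ?_⟩
    · simp [Matrix.one_mulVec, ← hb, h0.2]
    · simp [Matrix.one_mulVec]
  · set s : ℝ := Complex.normSq a + Complex.normSq b with hs
    have hspos : 0 < s := by
      rcases not_and_or.mp h0 with h | h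
      · have h1 := Complex.normSq_pos.mpr h
        have h2 := Complex.normSq_nonneg b
        simp only [hs]; linarith
      · have h1 := Complex.normSq_pos.mpr h
        have h2 := Complex.normSq_nonneg a
        simp only [hs]; linarith
    set r : ℝ := Real.sqrt s with hr
    have hrpos : 0 < r := Real.sqrt_pos.mpr hspos
    have hrne : (r : ℂ) ≠ 0 := by exact_mod_cast hrpos.ne'
    have hr2 : (r : ℂ) * (r : ℂ) = (s : ℂ) := by
      rw [← Complex.ofReal_mul, Real.mul_self_sqrt hspos.le]
    have e1 : (starRingEnd ℂ) a * a + (starRingEnd ℂ) b * b = (r:ℂ) * (r:ℂ) := by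
      rw [hr2, mul_comm _ a, mul_comm _ b, Complex.mul_conj, Complex.mul_conj, hs]
      push_cast; ring
    have hwx : w ≠ x := Ne.symm hxw
    set A : Matrix (Fin d) (Fin d) ℂ := Matrix.of fun p q =>
      if p = x then (if q = x then (starRingEnd ℂ) a / r else if q = w then (starRingEnd ℂ) b / r else 0)
      else if p = w then (if q = x then -b / r else if q = w then a / r else 0)
      else if p = q then (1:ℂ) else 0 with hA
    have hAe : ∀ p q, A p q =
      if p = x then (if q = x then (starRingEnd ℂ) a / r else if q = w then (starRingEnd ℂ) b / r else 0)
      else if p = w then (if q = x then -b / r else if q = w then a / r else 0)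
      else if p = q then (1:ℂ) else 0 := fun p q => rfl
    have hAxz : ∀ k, k ≠ x → k ≠ w → A x k = 0 := by
      intro k h1 h2; rw [hAe]; simp [h1, h2]
    have hAwz : ∀ k, k ≠ x → k ≠ w → A w k = 0 := by
      intro k h1 h2; rw [hAe]; simp [hwx, h1, h2]
    have hAid : ∀ p q, p ≠ x → p ≠ w → A p q = if p = q then 1 else 0 := by
      intro p q h1 h2; rw [hAe]; simp [h1, h2]
    have hAxx : A x x = (starRingEnd ℂ) a / r := by rw [hAe]; simp
    have hAxw : A x w = (starRingEnd ℂ) b / r := by rw [hAe]; simp [hwx]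
    have hAwx : A w x = -b / r := by rw [hAe]; simp [hwx]
    have hAww : A w w = a / r := by rw [hAe]; simp [hwx]
    have hsum : ∀ f : Fin d → ℂ, (∀ k, k ≠ x → k ≠ w → f k = 0) →
        (∑ k, f k) = f x + f w := by
      intro f hf
      refine Finset.sum_eq_add x w hxw ?_ (by simp) (by simp)
      intro c _ hc; exact hf c hc.1 hc.2
    have hdelta : ∀ (q : Fin d) (v : Fin d → ℂ), (∑ k, (if q = k then (1:ℂ) else 0) * v k) = v q := by
      intro q v
      simp [ite_mul]
    have hunit : A ∈ Matrix.unitaryGroup (Fin d) ℂ := by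
      rw [Matrix.mem_unitaryGroup_iff]
      ext p q
      rw [Matrix.mul_apply, Matrix.one_apply]
      by_cases hpx : p = x
      · rw [hpx]
        rw [hsum _ (fun k h1 h2 => by rw [hAxz k h1 h2, zero_mul])]
        by_cases hqx : q = x
        · rw [hqx, Matrix.star_apply, Matrix.star_apply, hAxx, hAxw, if_pos rfl]
          simp only [Complex.star_def, map_div₀, map_neg, Complex.conj_conj, Complex.conj_ofReal]
          field_simp
          linear_combination e1
        · by_cases hqw : q = w
          · rw [hqw, Matrix.star_apply, Matrix.star_apply, hAxx, hAxw, hAwx, hAww, if_neg hxw]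
            simp only [Complex.star_def, map_div₀, map_neg, Complex.conj_conj, Complex.conj_ofReal]
            field_simp
            ring
          · rw [Matrix.star_apply, Matrix.star_apply, hAxx, hAxw,
              hAid q x hqx hqw, hAid q w hqx hqw]
            simp [hqx, hqw, (Ne.symm hqx : x ≠ q)]
      · by_cases hpw : p = w
        · rw [hpw]
          rw [hsum _ (fun k h1 h2 => by rw [hAwz k h1 h2, zero_mul])]
          by_cases hqx : q = x
          · rw [hqx, Matrix.star_apply, Matrix.star_apply, hAwx, hAww, hAxx, hAxw, if_neg hwx]
            simp only [Complex.star_def, map_div₀, map_neg, Complex.conj_conj, Complex.conj_ofReal]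
            field_simp
            ring
          · by_cases hqw : q = w
            · rw [hqw, Matrix.star_apply, Matrix.star_apply, hAwx, hAww, if_pos rfl]
              simp only [Complex.star_def, map_div₀, map_neg, Complex.conj_conj, Complex.conj_ofReal]
              field_simp
              linear_combination e1
            · rw [Matrix.star_apply, Matrix.star_apply, hAwx, hAww,
                hAid q x hqx hqw, hAid q w hqx hqw]
              simp [hqx, hqw, (Ne.symm hqw : w ≠ q)]
        · have h1 : (∑ k, A p k * (star A) k q) = (star A) p q := by
            rw [Finset.sum_congr rfl (fun k _ => by rw [hAid p k hpx hpw]), hdelta]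
          rw [h1, Matrix.star_apply]
          by_cases hqx : q = x
          · rw [hqx, hAxz p hpx hpw, if_neg (fun h => hpx h), star_zero]
          · by_cases hqw : q = w
            · rw [hqw, hAwz p hpx hpw, if_neg (fun h => hpw h), star_zero]
            · rw [hAid q p hqx hqw]
              by_cases h : p = q
              · rw [h]; simp
              · rw [if_neg (fun hh => h hh.symm), if_neg h, star_zero]
    refine ⟨A, ⟨hunit, ?_⟩, ?_, ?_⟩
    · intro p q hpq
      rcases hpq with h | h
      · simp only [Set.mem_insert_iff, Set.mem_singleton_iff, not_or] at h
        exact hAid p q h.1 h.2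
      · simp only [Set.mem_insert_iff, Set.mem_singleton_iff, not_or] at h
        by_cases hpx : p = x
        · rw [hpx, hAxz q h.1 h.2, if_neg (fun hh => h.1 hh.symm)]
        · by_cases hpw : p = w
          · rw [hpw, hAwz q h.1 h.2, if_neg (fun hh => h.2 hh.symm)]
          · exact hAid p q hpx hpw
    · simp only [Matrix.mulVec, dotProduct]
      rw [hsum _ (fun k h1 h2 => by rw [hAwz k h1 h2, zero_mul])]
      rw [hAwx, hAww, ← ha, ← hb]
      field_simp
      ring
    · intro p h1 h2
      simp only [Matrix.mulVec, dotProduct]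
      rw [Finset.sum_congr rfl (fun k _ => by rw [hAid p k h1 h2]), hdelta]


variable {d : ℕ} (G : SimpleGraph (Fin d))

/-- Reachability inside a finite set of vertices. -/
def ReachIn (S : Finset (Fin d)) : Fin d → Fin d → Prop :=
  Relation.ReflTransGen (fun x y => x ∈ S ∧ y ∈ S ∧ G.Adj x y)

lemma reachIn_symm {S : Finset (Fin d)} {a b : Fin d} (h : ReachIn G S a b) :
    ReachIn G S b a :=
  (@Relation.ReflTransGen.stdSymm _ _ ⟨fun _ _ hxy => ⟨hxy.2.1, hxy.1, hxy.2.2.symm⟩⟩).symm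
    _ _ h

lemma reachIn_mono {S T : Finset (Fin d)} (hST : S ⊆ T) {a b : Fin d}
    (h : ReachIn G S a b) : ReachIn G T a b :=
  Relation.ReflTransGen.mono (by intro _ _ hxy; exact ⟨hST hxy.1, hST hxy.2.1, hxy.2.2⟩) _ _ h

/-- A list of distinct vertices, each adjacent to a later member of the list.
The head is a "leaf" which can be eliminated first; the last element is a root. -/
inductive GChain : List (Fin d) → Prop
  | nil : GChain []
  | single (v : Fin d) : GChain [v]
  | cons (w : Fin d) (l : List (Fin d)) (h : GChain l)
      (hx : ∃ x ∈ l, G.Adj x w) (hw : w ∉ l) : GChain (w :: l)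

lemma GChain.nodup {l : List (Fin d)} (h : GChain G l) : l.Nodup := by
  induction h with
  | nil => simp
  | single v => simp
  | cons w l h hx hw ih => exact List.nodup_cons.mpr ⟨hw, ih⟩

lemma GChain.reach {l : List (Fin d)} (h : GChain G l) :
    ∀ a ∈ l, ∀ b ∈ l, ReachIn G l.toFinset a b := by
  induction h with
  | nil => intro a ha; simp at ha
  | single v =>
      intro a ha b hb
      simp only [List.mem_singleton] at ha hb
      rw [ha, hb]; exact Relation.ReflTransGen.refl
  | cons w l h hx hw ih =>
      obtain ⟨x, hxl, hadj⟩ := hx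
      have hsub : l.toFinset ⊆ (w :: l).toFinset := by
        intro z hz; simp only [List.toFinset_cons, Finset.mem_insert]
        right; exact hz
      have hwx : ReachIn G (w :: l).toFinset w x :=
        Relation.ReflTransGen.single
          ⟨by simp, by simp [hxl], hadj.symm⟩
      intro a ha b hb
      rcases List.mem_cons.mp ha with ha' | ha'
      · subst ha'
        rcases List.mem_cons.mp hb with hb' | hb'
        · subst hb'; exact Relation.ReflTransGen.refl
        · exact hwx.trans (reachIn_mono G hsub (ih x hxl b hb'))
      · rcases List.mem_cons.mp hb with hb' | hb'
        · subst hb'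
          exact reachIn_symm G (hwx.trans (reachIn_mono G hsub (ih x hxl a ha')))
        · exact reachIn_mono G hsub (ih a ha' b hb')

/-- Crossing lemma: a path within `S` from inside `T` to outside `T` crosses. -/
lemma reachIn_crossing {S : Finset (Fin d)} {T : Finset (Fin d)} {r b : Fin d}
    (h : ReachIn G S r b) (hr : r ∈ T) (hb : b ∉ T) :
    ∃ x ∈ T, ∃ y ∈ S, y ∉ T ∧ G.Adj x y := by
  induction h with
  | refl => exact absurd hr hb
  | @tail c b' hac hcb ih =>
      by_cases hc : c ∈ T
      · exact ⟨c, hc, b', hcb.2.1, hb, hcb.2.2⟩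
      · exact ih hc

/-- Grow a chain to cover `S`, keeping the root (= last element). -/
lemma gchain_extend (S : Finset (Fin d)) :
    ∀ (n : ℕ) (l : List (Fin d)), GChain G l → l.toFinset ⊆ S → l ≠ [] →
    (∀ b ∈ S, ∀ a ∈ l.toFinset, ReachIn G S a b) →
    (S \ l.toFinset).card ≤ n →
    ∃ l' : List (Fin d), GChain G l' ∧ l'.toFinset = S ∧ l'.getLast? = l.getLast? := by
  intro n
  induction n with
  | zero =>
      intro l hl hsub hne hreach hcard
      have : S \ l.toFinset = ∅ := Finset.card_eq_zero.mp (Nat.le_zero.mp hcard)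
      have heq : l.toFinset = S := Finset.Subset.antisymm hsub
        (fun z hz => by
          by_contra hzl
          exact absurd (Finset.mem_sdiff.mpr ⟨hz, hzl⟩) (this ▸ Finset.notMem_empty z))
      exact ⟨l, hl, heq, rfl⟩
  | succ n ih =>
      intro l hl hsub hne hreach hcard
      by_cases heq : l.toFinset = S
      · exact ⟨l, hl, heq, rfl⟩
      · -- pick b ∈ S \ l.toFinset
        have hex : (S \ l.toFinset).Nonempty := by
          rw [Finset.sdiff_nonempty]
          intro hSl
          exact heq (Finset.Subset.antisymm hsub hSl)
        obtain ⟨b, hb⟩ := hex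
        rw [Finset.mem_sdiff] at hb
        obtain ⟨a0, ha0⟩ : l.toFinset.Nonempty := by
          cases l with
          | nil => exact absurd rfl hne
          | cons z t => exact ⟨z, by simp⟩
        obtain ⟨x, hxT, y, hyS, hyT, hadj⟩ :=
          reachIn_crossing G (hreach b hb.1 a0 ha0) ha0 hb.2
        have hyl : y ∉ l := fun hyl => hyT (List.mem_toFinset.mpr hyl)
        have hchain : GChain G (y :: l) :=
          GChain.cons y l hl ⟨x, List.mem_toFinset.mp hxT, hadj⟩ hyl
        have hlast : (y :: l).getLast? = l.getLast? := by
          cases l with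
          | nil => exact absurd rfl hne
          | cons a t => exact List.getLast?_cons_cons
        have hsub' : (y :: l).toFinset ⊆ S := by
          intro z hz
          simp only [List.toFinset_cons, Finset.mem_insert] at hz
          rcases hz with hz | hz
          · exact hz ▸ hyS
          · exact hsub hz
        have hreach' : ∀ c ∈ S, ∀ a ∈ (y :: l).toFinset, ReachIn G S a c := by
          intro c hc a haz
          simp only [List.toFinset_cons, Finset.mem_insert] at haz
          rcases haz with haz | haz
          · subst haz
            exact Relation.ReflTransGen.trans
              (Relation.ReflTransGen.single ⟨hyS, hsub hxT, hadj.symm⟩)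
              (hreach c hc x hxT)
          · exact hreach c hc a haz
        have hcard' : (S \ (y :: l).toFinset).card ≤ n := by
          have h1 : S \ (y :: l).toFinset = (S \ l.toFinset).erase y := by
            simp only [List.toFinset_cons]
            exact Finset.sdiff_insert S l.toFinset y
          rw [h1, Finset.card_erase_of_mem (Finset.mem_sdiff.mpr ⟨hyS, hyT⟩)]
          omega
        obtain ⟨l', h1, h2, h3⟩ := ih (y :: l) hchain hsub' (by simp) hreach' hcard'
        exact ⟨l', h1, h2, h3.trans hlast⟩

lemma givens_apply_of_not_mem {d : ℕ} {j k : Fin d} {A : Matrix (Fin d) (Fin d) ℂ}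
    (hA : IsGivensOn j k A) {p : Fin d} (h1 : p ≠ j) (h2 : p ≠ k) (q : Fin d) :
    A p q = if p = q then 1 else 0 :=
  hA.2 p q (Or.inl (by simp [h1, h2]))

lemma givens_apply_of_not_mem' {d : ℕ} {j k : Fin d} {A : Matrix (Fin d) (Fin d) ℂ}
    (hA : IsGivensOn j k A) {q : Fin d} (h1 : q ≠ j) (h2 : q ≠ k) (p : Fin d) :
    A p q = if p = q then 1 else 0 :=
  hA.2 p q (Or.inr (by simp [h1, h2]))

/-- Off-diagonal entries vanish whenever one index lies outside `T`. -/
def StdOut {d : ℕ} (T : Finset (Fin d)) (M : Matrix (Fin d) (Fin d) ℂ) : Prop :=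
  ∀ p q, p ≠ q → (p ∉ T ∨ q ∉ T) → M p q = 0

lemma stdOut_mul_givens {d : ℕ} {T : Finset (Fin d)} {j k : Fin d}
    (hj : j ∈ T) (hk : k ∈ T) {A M : Matrix (Fin d) (Fin d) ℂ}
    (hA : IsGivensOn j k A) (hM : StdOut T M) : StdOut T (A * M) := by
  intro p q hpq hout
  rw [Matrix.mul_apply]
  by_cases hpT : p ∈ T
  · have hqT : q ∉ T := by tauto
    have hqj : q ≠ j := fun h => hqT (h ▸ hj)
    have hqk : q ≠ k := fun h => hqT (h ▸ hk)
    have hterm : ∀ c, A p c * M c q = if c = q then A p c * M c q else 0 := by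
      intro c
      by_cases hc : c = q
      · simp [hc]
      · rw [hM c q hc (Or.inr hqT), mul_zero, if_neg hc]
    rw [Finset.sum_congr rfl (fun c _ => hterm c), Finset.sum_ite_eq' Finset.univ q]
    rw [givens_apply_of_not_mem' hA hqj hqk p, if_neg hpq]
    simp
  · have hpj : p ≠ j := fun h => hpT (h ▸ hj)
    have hpk : p ≠ k := fun h => hpT (h ▸ hk)
    have hterm : ∀ c, A p c * M c q = if p = c then M c q else 0 := by
      intro c
      rw [givens_apply_of_not_mem hA hpj hpk c]
      by_cases hc : p = c <;> simp [hc]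
    rw [Finset.sum_congr rfl (fun c _ => hterm c), Finset.sum_ite_eq Finset.univ p]
    simp [hM p q hpq hout]

lemma stdOut_mul_list {d : ℕ} {T : Finset (Fin d)} :
    ∀ (L : List (Matrix (Fin d) (Fin d) ℂ)),
    (∀ A ∈ L, ∃ j k : Fin d, j ∈ T ∧ k ∈ T ∧ IsGivensOn j k A) →
    ∀ {M}, StdOut T M → StdOut T (L.prod * M)
  | [], _, M, hM => by simpa using hM
  | A :: L, h, M, hM => by
    have h1 := stdOut_mul_list L (fun B hB => h B (List.mem_cons_of_mem A hB)) hM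
    obtain ⟨j, k, hj, hk, hA⟩ := h A (List.mem_cons_self)
    have := stdOut_mul_givens hj hk hA h1
    rw [List.prod_cons, mul_assoc]
    exact this

lemma list_prod_unitary {d : ℕ} :
    ∀ (L : List (Matrix (Fin d) (Fin d) ℂ)),
    (∀ A ∈ L, A ∈ Matrix.unitaryGroup (Fin d) ℂ) →
    L.prod ∈ Matrix.unitaryGroup (Fin d) ℂ
  | [], _ => by simpa using one_mem _
  | A :: L, h => by
    rw [List.prod_cons]
    exact mul_mem (h A (List.mem_cons_self))
      (list_prod_unitary L (fun B hB => h B (List.mem_cons_of_mem A hB)))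

/-- If column `w` of a unitary matrix is supported on `w`, so is row `w`. -/
lemma unitary_row_of_col {d : ℕ} {M : Matrix (Fin d) (Fin d) ℂ}
    (hM : M ∈ Matrix.unitaryGroup (Fin d) ℂ) (w : Fin d)
    (hcol : ∀ p, p ≠ w → M p w = 0) : ∀ q, q ≠ w → M w q = 0 := by
  have h1 : M * star M = 1 := Matrix.mem_unitaryGroup_iff.mp hM
  have h2 : star M * M = 1 := Matrix.mem_unitaryGroup_iff'.mp hM
  have hww : Complex.normSq (M w w) = 1 := by
    have := congrFun (congrFun h2 w) w
    rw [Matrix.mul_apply, Matrix.one_apply_eq] at this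
    rw [Finset.sum_eq_single w
      (fun k _ hk => by rw [Matrix.star_apply, hcol k hk, mul_zero])
      (by simp)] at this
    rw [Matrix.star_apply, Complex.star_def, mul_comm, Complex.mul_conj] at this
    exact_mod_cast this
  have hrow : (∑ q, Complex.normSq (M w q)) = 1 := by
    have := congrFun (congrFun h1 w) w
    rw [Matrix.mul_apply, Matrix.one_apply_eq] at this
    have heq : ∀ q : Fin d, M w q * (star M) q w = (Complex.normSq (M w q) : ℂ) := by
      intro q
      rw [Matrix.star_apply, Complex.star_def, Complex.mul_conj]
    rw [Finset.sum_congr rfl (fun q _ => heq q)] at this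
    exact_mod_cast this
  have hrest : (∑ q ∈ Finset.univ.erase w, Complex.normSq (M w q)) = 0 := by
    have := Finset.add_sum_erase Finset.univ (fun q => Complex.normSq (M w q))
      (Finset.mem_univ w)
    rw [hrow] at this
    beta_reduce at this
    rw [hww] at this
    linarith [this]
  intro q hq
  have := (Finset.sum_eq_zero_iff_of_nonneg
    (fun i _ => Complex.normSq_nonneg (M w i))).mp hrest q
    (Finset.mem_erase.mpr ⟨hq, Finset.mem_univ q⟩)
  exact Complex.normSq_eq_zero.mp this


lemma gchain_root {d : ℕ} (G : SimpleGraph (Fin d)) (T : Finset (Fin d)) (r : Fin d)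
    (hr : r ∈ T) (hreach : ∀ b ∈ T, ReachIn G T r b) :
    ∃ l : List (Fin d), GChain G l ∧ l.toFinset = T ∧ l.getLast? = some r := by
  obtain ⟨l', h1, h2, h3⟩ := gchain_extend G T (T \ ([r] : List (Fin d)).toFinset).card [r]
    (GChain.single r) (by simpa using hr) (by simp)
    (fun b hb a ha => by
      simp only [List.toFinset_cons, List.toFinset_nil, LawfulSingleton.insert_empty_eq,
        Finset.mem_singleton] at ha
      exact ha ▸ hreach b hb)
    le_rfl
  exact ⟨l', h1, h2, by simpa using h3⟩

lemma concentrate {d : ℕ} (G : SimpleGraph (Fin d)) :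
    ∀ (l : List (Fin d)), GChain G l → ∀ (u : Fin d → ℂ),
    (∀ p, p ∉ l.toFinset → u p = 0) →
    ∃ L : List (Matrix (Fin d) (Fin d) ℂ),
      L.length ≤ l.length - 1 ∧
      (∀ A ∈ L, ∃ j k : Fin d, j ∈ l.toFinset ∧ k ∈ l.toFinset ∧ G.Adj j k ∧ IsGivensOn j k A) ∧
      (∀ A ∈ L, A ∈ Matrix.unitaryGroup (Fin d) ℂ) ∧
      ∀ p, l.getLast? ≠ some p → (L.prod.mulVec u) p = 0 := by
  intro l hl
  induction hl with
  | nil =>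
      intro u hu
      exact ⟨[], by simp, by simp, by simp, fun p _ => by
        simp only [List.prod_nil, Matrix.one_mulVec]
        exact hu p (by simp)⟩
  | single v =>
      intro u hu
      refine ⟨[], by simp, by simp, by simp, fun p hp => ?_⟩
      simp only [List.prod_nil, Matrix.one_mulVec]
      refine hu p (fun hmem => hp ?_)
      simp only [List.toFinset_cons, List.toFinset_nil, LawfulSingleton.insert_empty_eq,
        Finset.mem_singleton] at hmem
      simp [hmem]
  | cons w l h hx hw ih =>
      intro u hu
      obtain ⟨x, hxl, hadj⟩ := hx
      have hxw : x ≠ w := fun hxeq => hw (hxeq ▸ hxl)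
      obtain ⟨A, hAgiv, hAw, hAother⟩ := givens_exists x w hxw u
      have hu'supp : ∀ p, p ∉ l.toFinset → (A.mulVec u) p = 0 := by
        intro p hp
        by_cases hpw : p = w
        · rw [hpw]; exact hAw
        · by_cases hpx : p = x
          · exact absurd (hpx ▸ hxl) (fun hc => hp (List.mem_toFinset.mpr hc))
          · rw [hAother p hpx hpw]
            exact hu p (fun hc => by
              simp only [List.toFinset_cons, Finset.mem_insert] at hc
              rcases hc with hc | hc
              · exact hpw hc
              · exact hp hc)
      obtain ⟨L', hlen, hgiv, hunit, hzero⟩ := ih (A.mulVec u) hu'supp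
      have hlne : l ≠ [] := by
        intro hnil; rw [hnil] at hxl; simp at hxl
      refine ⟨L' ++ [A], ?_, ?_, ?_, ?_⟩
      · have h1 : 1 ≤ l.length := by
          cases l with
          | nil => exact absurd rfl hlne
          | cons a t => simp
        have h2 : (L' ++ [A]).length = L'.length + 1 := by simp
        have h3 : (w :: l).length = l.length + 1 := by simp
        omega
      · intro B hB
        rcases List.mem_append.mp hB with hB | hB
        · obtain ⟨j, k, hj, hk, hjk, hgB⟩ := hgiv B hB
          exact ⟨j, k, by simp [List.mem_toFinset.mp hj],
            by simp [List.mem_toFinset.mp hk], hjk, hgB⟩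
        · rw [List.mem_singleton.mp hB]
          exact ⟨x, w, by simp [hxl], by simp, hadj, hAgiv⟩
      · intro B hB
        rcases List.mem_append.mp hB with hB | hB
        · exact hunit B hB
        · rw [List.mem_singleton.mp hB]; exact hAgiv.1
      · intro p hp
        have hlast : (w :: l).getLast? = l.getLast? := by
          cases l with
          | nil => exact absurd rfl hlne
          | cons a t => exact List.getLast?_cons_cons
        rw [List.prod_append, List.prod_singleton, ← Matrix.mulVec_mulVec]
        exact hzero p (by rw [← hlast]; exact hp)

lemma tri_step (n : ℕ) : n * (n - 1) / 2 + n = (n + 1) * n / 2 := by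
  cases n with
  | zero => rfl
  | succ m =>
      obtain ⟨k, hk⟩ := Nat.even_mul_succ_self m
      have e1 : (m + 1) * m = m * (m + 1) := Nat.mul_comm _ _
      have e2 : (m + 1 + 1) * (m + 1) = m * (m + 1) + 2 * (m + 1) := by ring
      simp only [Nat.add_sub_cancel]
      omega

lemma outer {d : ℕ} (G : SimpleGraph (Fin d)) :
    ∀ (l : List (Fin d)), GChain G l →
    ∀ (M : Matrix (Fin d) (Fin d) ℂ), M ∈ Matrix.unitaryGroup (Fin d) ℂ →
    StdOut l.toFinset M →
    ∃ L : List (Matrix (Fin d) (Fin d) ℂ),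
      L.length ≤ l.length * (l.length - 1) / 2 ∧
      (∀ A ∈ L, ∃ j k : Fin d, G.Adj j k ∧ IsGivensOn j k A) ∧
      (L.prod * M).IsDiag := by
  intro l
  induction l with
  | nil =>
      intro _ M _ hstd
      refine ⟨[], by simp, by simp, ?_⟩
      intro p q hpq
      simp only [List.prod_nil, one_mul]
      exact hstd p q hpq (Or.inl (by simp))
  | cons w l ihl =>
      intro hchain M hMu hstd
      have hl : GChain G l := by
        cases hchain with
        | single v => exact GChain.nil
        | cons _ _ h _ _ => exact h
      have hwmem : w ∈ (w :: l).toFinset := by simp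
      -- build a chain of the whole set rooted at w
      have hreach : ∀ b ∈ (w :: l).toFinset, ReachIn G (w :: l).toFinset w b := by
        intro b hb
        exact hchain.reach G w (by simp) b (List.mem_toFinset.mp hb)
      obtain ⟨l2, hl2, hl2set, hl2last⟩ := gchain_root G (w :: l).toFinset w hwmem hreach
      have hl2len : l2.length = (w :: l).length := by
        rw [← List.toFinset_card_of_nodup (hl2.nodup),
          ← List.toFinset_card_of_nodup (hchain.nodup), hl2set]
      -- concentrate column w
      have hcolsupp : ∀ p, p ∉ l2.toFinset → M p w = 0 := by
        intro p hp
        rw [hl2set] at hp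
        have hpw : p ≠ w := fun hc => hp (hc ▸ hwmem)
        exact hstd p w hpw (Or.inl hp)
      obtain ⟨L1, hL1len, hL1giv, hL1unit, hL1zero⟩ :=
        concentrate G l2 hl2 (fun p => M p w) hcolsupp
      set M1 := L1.prod * M with hM1
      have hM1u : M1 ∈ Matrix.unitaryGroup (Fin d) ℂ :=
        mul_mem (list_prod_unitary L1 hL1unit) hMu
      have hM1col : ∀ p, p ≠ w → M1 p w = 0 := by
        intro p hp
        have : M1 p w = (L1.prod.mulVec (fun k => M k w)) p := by
          simp [hM1, Matrix.mul_apply, Matrix.mulVec, dotProduct]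
        rw [this]
        exact hL1zero p (by rw [hl2last]; exact fun hc => hp (Option.some_inj.mp hc).symm)
      have hM1row : ∀ q, q ≠ w → M1 w q = 0 := unitary_row_of_col hM1u w hM1col
      have hM1std : StdOut (w :: l).toFinset M1 := by
        rw [hM1]
        refine stdOut_mul_list L1 ?_ hstd
        intro A hA
        obtain ⟨j, k, hj, hk, _, hgA⟩ := hL1giv A hA
        exact ⟨j, k, hl2set ▸ hj, hl2set ▸ hk, hgA⟩
      have hM1std' : StdOut l.toFinset M1 := by
        intro p q hpq hout
        rcases hout with hout | hout
        · by_cases hpT : p ∈ (w :: l).toFinset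
          · have hpw : p = w := by
              simp only [List.toFinset_cons, Finset.mem_insert] at hpT
              rcases hpT with h | h
              · exact h
              · exact absurd h hout
            exact hpw ▸ hM1row q (fun hc => hpq (hpw ▸ hc.symm ▸ rfl))
          · exact hM1std p q hpq (Or.inl hpT)
        · by_cases hqT : q ∈ (w :: l).toFinset
          · have hqw : q = w := by
              simp only [List.toFinset_cons, Finset.mem_insert] at hqT
              rcases hqT with h | h
              · exact h
              · exact absurd h hout
            exact hqw ▸ hM1col p (fun hc => hpq (hqw ▸ hc ▸ rfl))
          · exact hM1std p q hpq (Or.inr hqT)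
      obtain ⟨L2, hL2len, hL2giv, hL2diag⟩ := ihl hl M1 hM1u hM1std'
      refine ⟨L2 ++ L1, ?_, ?_, ?_⟩
      · have h1 : L1.length ≤ l.length := by
          rw [hl2len] at hL1len
          simpa using hL1len
        have h2 : (L2 ++ L1).length = L2.length + L1.length := by simp
        have h3 : (w :: l).length = l.length + 1 := by simp
        have h4 := tri_step l.length
        have h5 : (w :: l).length - 1 = l.length := by simp
        have h6 : (w :: l).length * ((w :: l).length - 1) = (l.length + 1) * l.length := by
          simp
        omega
      · intro A hA
        rcases List.mem_append.mp hA with hA | hA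
        · exact hL2giv A hA
        · obtain ⟨j, k, _, _, hjk, hgA⟩ := hL1giv A hA
          exact ⟨j, k, hjk, hgA⟩
      · rw [List.prod_append, mul_assoc, ← hM1]
        exact hL2diag

/-- If the coupling graph is connected, any unitary can be brought to diagonal
form by at most d(d−1)/2 Givens rotations on planes which are edges of `G`. -/
theorem connected_coupling_graph_diagonalizes (d : ℕ) (G : SimpleGraph (Fin d))
    (hG : G.Connected) (U : Matrix (Fin d) (Fin d) ℂ)
    (hU : U ∈ Matrix.unitaryGroup (Fin d) ℂ) :
    ∃ L : List (Matrix (Fin d) (Fin d) ℂ),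
      L.length ≤ d * (d - 1) / 2 ∧
      (∀ A ∈ L, ∃ j k : Fin d, G.Adj j k ∧ IsGivensOn j k A) ∧
      (L.prod * U).IsDiag := by
  obtain ⟨v⟩ := hG.nonempty
  have hwalk : ∀ {a b : Fin d}, G.Walk a b → ReachIn G Finset.univ a b := by
    intro a b p
    induction p with
    | nil => exact Relation.ReflTransGen.refl
    | cons hadj p ih =>
        exact Relation.ReflTransGen.trans
          (Relation.ReflTransGen.single ⟨Finset.mem_univ _, Finset.mem_univ _, hadj⟩) ih
  have hreach : ∀ b ∈ (Finset.univ : Finset (Fin d)), ReachIn G Finset.univ v b := by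
    intro b _
    obtain ⟨p⟩ := hG.preconnected v b
    exact hwalk p
  obtain ⟨l, hl, hlset, _⟩ := gchain_root G Finset.univ v (Finset.mem_univ v) hreach
  have hllen : l.length = d := by
    rw [← List.toFinset_card_of_nodup hl.nodup, hlset]
    simp
  obtain ⟨L, hLlen, hLgiv, hLdiag⟩ := outer G l hl U hU
    (fun p q hpq hout => by
      rcases hout with h | h
      · exact absurd (hlset ▸ Finset.mem_univ p) h
      · exact absurd (hlset ▸ Finset.mem_univ q) h)
  exact ⟨L, by rw [hllen] at hLlen; exact hLlen, hLgiv, hLdiag⟩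
end

section
/- If the coupling graph is connected, then any diagonal unitary T = ∑_j e^{iφ_j} |j⟩⟨j| on ℂ^d can be written, up to a global phase, as a product of d−1 commuting evolutions exp(−i θ_l (|j_l⟩⟨j_l| − |k_l⟩⟨k_l|)) where each pair (j_l,k_l) is an edge of a spanning tree of the graph. -/
open Matrix Complex

/-- The generator H^z_{jk} = |j⟩⟨j| − |k⟩⟨k|. -/
def Hz {d : ℕ} (j k : Fin d) : Matrix (Fin d) (Fin d) ℂ :=
  Matrix.single j j 1 - Matrix.single k k 1

lemma Hz_diagonal {d : ℕ} (j k : Fin d) :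
    Hz j k = Matrix.diagonal
      (fun i => (if i = j then (1 : ℂ) else 0) - (if i = k then 1 else 0)) := by
  ext a b
  by_cases hab : a = b <;>
    by_cases haj : a = j <;>
      by_cases hak : a = k <;>
        simp_all [Hz, Matrix.single, Matrix.diagonal, Matrix.sub_apply, eq_comm]

lemma prod_map_diagonal {d : ℕ} (L : List (Fin d → ℂ)) :
    (L.map Matrix.diagonal).prod =
      Matrix.diagonal (fun i => (L.map (fun f => f i)).prod) := by
  induction L with
  | nil => simp
  | cons f L ih =>
    simp only [List.map_cons, List.prod_cons, ih, Matrix.diagonal_mul_diagonal]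

/-- Auxiliary recursive definition: the angle associated to each vertex of the
BFS tree, defined by summing over children. -/
noncomputable def Theta (n : ℕ) (p : Fin (n + 1) → Fin (n + 1)) (D : Fin (n + 1) → ℕ)
    (hD : ∀ w : Fin (n + 1), w ≠ 0 → D w = D (p w) + 1) (hb : ∀ v, D v ≤ n)
    (g : Fin (n + 1) → ℝ) (v : Fin (n + 1)) : ℝ :=
  if v = 0 then 0
  else g v + ∑ w ∈ (Finset.univ.filter fun w => w ≠ 0 ∧ p w = v).attach,
    Theta n p D hD hb g w.1
termination_by n - D v
decreasing_by
  have hw := (Finset.mem_filter.mp w.2).2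
  have h1 : D w.1 = D v + 1 := by rw [hD w.1 hw.1, hw.2]
  have h2 := hb w.1
  omega

lemma Theta_zero (n : ℕ) (p : Fin (n + 1) → Fin (n + 1)) (D : Fin (n + 1) → ℕ)
    (hD : ∀ w : Fin (n + 1), w ≠ 0 → D w = D (p w) + 1) (hb : ∀ v, D v ≤ n)
    (g : Fin (n + 1) → ℝ) : Theta n p D hD hb g 0 = 0 := by
  rw [Theta]
  simp

lemma Theta_ne (n : ℕ) (p : Fin (n + 1) → Fin (n + 1)) (D : Fin (n + 1) → ℕ)
    (hD : ∀ w : Fin (n + 1), w ≠ 0 → D w = D (p w) + 1) (hb : ∀ v, D v ≤ n)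
    (g : Fin (n + 1) → ℝ) (v : Fin (n + 1)) (hv : v ≠ 0) :
    Theta n p D hD hb g v =
      g v + ∑ w ∈ Finset.univ.filter (fun w => w ≠ 0 ∧ p w = v),
        Theta n p D hD hb g w := by
  rw [Theta, if_neg hv, Finset.sum_attach]

/-- If the coupling graph is connected, any diagonal unitary can be written, up
to a global phase, as a product of d−1 evolutions exp(−iθ_l H^z) along the
edges of a spanning tree of the graph. -/
theorem diagonal_unitary_from_spanning_tree (n : ℕ)
    (G : SimpleGraph (Fin (n + 1))) (hG : G.Connected)
    (φ : Fin (n + 1) → ℝ) :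
    ∃ (e : Fin n → Fin (n + 1) × Fin (n + 1)) (θ : Fin n → ℝ) (α : ℝ),
      (∀ l, G.Adj (e l).1 (e l).2) ∧
      (Function.Injective fun l => s((e l).1, (e l).2)) ∧
      (SimpleGraph.fromEdgeSet (Set.range fun l => s((e l).1, (e l).2))).Connected ∧
      Complex.exp (I * α) •
        (List.ofFn fun l : Fin n =>
          NormedSpace.exp ((-(I * (θ l : ℂ))) • Hz (e l).1 (e l).2)).prod =
        Matrix.diagonal fun j => Complex.exp (I * φ j) := by
  classical
  set D : Fin (n + 1) → ℕ := fun v => G.dist v 0 with hDdef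
  have hb : ∀ v, D v ≤ n := by
    intro v
    obtain ⟨q, hq, hlen⟩ := hG.exists_path_of_dist v 0
    have := hq.length_lt
    simp only [Fintype.card_fin] at this
    simp only [hDdef]
    omega
  have hstep : ∀ v : Fin (n + 1), v ≠ 0 → ∃ u, G.Adj v u ∧ D v = D u + 1 := by
    intro v hv
    have hdn : G.dist v 0 ≠ 0 := by
      rw [SimpleGraph.dist_ne_zero_iff_ne_and_reachable]
      exact ⟨hv, hG.preconnected v 0⟩
    obtain ⟨q, hq⟩ := SimpleGraph.exists_walk_of_dist_ne_zero hdn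
    cases q with
    | nil => simp at hq hdn
    | @cons _ b _ h q' =>
      refine ⟨b, h, ?_⟩
      have h1 : G.dist b 0 ≤ q'.length := SimpleGraph.dist_le q'
      obtain ⟨r, hr⟩ := (hG.preconnected b 0).exists_walk_length_eq_dist
      have h2 : G.dist v 0 ≤ G.dist b 0 + 1 := by
        have := SimpleGraph.dist_le (SimpleGraph.Walk.cons h r)
        simpa [hr, Nat.add_comm] using this
      simp only [SimpleGraph.Walk.length_cons] at hq
      simp only [hDdef]
      omega
  choose pf hadjf hDf using hstep
  set p : Fin (n + 1) → Fin (n + 1) := fun v => if hv : v = 0 then 0 else pf v hv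
    with hpdef
  have hA : ∀ w : Fin (n + 1), w ≠ 0 → G.Adj w (p w) := by
    intro w hw
    simp only [hpdef, dif_neg hw]
    exact hadjf w hw
  have hD : ∀ w : Fin (n + 1), w ≠ 0 → D w = D (p w) + 1 := by
    intro w hw
    simp only [hpdef, dif_neg hw]
    exact hDf w hw
  set α : ℝ := (∑ v, φ v) / ((n : ℝ) + 1) with hαdef
  have hα : ((n : ℝ) + 1) * α = ∑ v, φ v := by
    rw [hαdef, mul_div_cancel₀]
    positivity
  set T : Fin (n + 1) → ℝ := Theta n p D hD hb (fun v => α - φ v) with hTdef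
  set C : Fin (n + 1) → ℝ := fun j => ∑ w ∈ Finset.univ.filter (fun w => p w = j), T w
    with hCdef
  have hT0 : T 0 = 0 := Theta_zero n p D hD hb _
  have hCT : ∀ j : Fin (n + 1), j ≠ 0 → T j = (α - φ j) + C j := by
    intro j hj
    rw [hTdef, Theta_ne n p D hD hb _ j hj]
    congr 1
    rw [hCdef]
    apply Finset.sum_subset
    · intro x hx
      simp only [Finset.mem_filter, Finset.mem_univ, true_and] at hx ⊢
      exact hx.2
    · intro x hx hx2
      simp only [Finset.mem_filter, Finset.mem_univ, true_and, not_and] at hx hx2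
      have hx0 : x = 0 := by
        by_contra h
        exact (hx2 h) hx
      rw [hx0, ← hTdef]
      exact hT0
  have hsumC : ∑ j, C j = ∑ w, T w := Finset.sum_fiberwise Finset.univ p T
  have hE0 : ∀ j : Fin (n + 1), j ≠ 0 → α - T j + C j = φ j := by
    intro j hj
    have := hCT j hj
    linarith
  have hsys : ∀ j : Fin (n + 1), α - T j + C j = φ j := by
    intro j
    by_cases hj : j = 0
    · subst hj
      have htot : ∑ j, (α - T j + C j) = ∑ j, φ j := by
        rw [Finset.sum_add_distrib, Finset.sum_sub_distrib, hsumC, Finset.sum_const,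
          Finset.card_univ, Fintype.card_fin, nsmul_eq_mul]
        push_cast
        linarith
      have h1 : ∑ j, (α - T j + C j) =
          (α - T 0 + C 0) + ∑ j ∈ Finset.univ.erase 0, (α - T j + C j) :=
        (Finset.add_sum_erase _ _ (Finset.mem_univ 0)).symm
      have h2 : ∑ j, φ j = φ 0 + ∑ j ∈ Finset.univ.erase 0, φ j :=
        (Finset.add_sum_erase _ _ (Finset.mem_univ 0)).symm
      have h3 : ∑ j ∈ Finset.univ.erase 0, (α - T j + C j) =
          ∑ j ∈ Finset.univ.erase 0, φ j :=
        Finset.sum_congr rfl fun j hj => hE0 j (Finset.ne_of_mem_erase hj)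
      linarith
    · exact hE0 j hj
  refine ⟨fun l => (l.succ, p l.succ), fun l => T l.succ, α, ?_, ?_, ?_, ?_⟩
  · intro l
    exact hA l.succ (Fin.succ_ne_zero l)
  · intro a b hab
    have hab' : s(a.succ, p a.succ) = s(b.succ, p b.succ) := hab
    rw [Sym2.eq_iff] at hab'
    rcases hab' with ⟨h1, _⟩ | ⟨h1, h2⟩
    · exact Fin.succ_injective n h1
    · exfalso
      have da := hD a.succ (Fin.succ_ne_zero a)
      have db := hD b.succ (Fin.succ_ne_zero b)
      rw [h2] at da
      rw [← h1] at db
      omega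
  · show (SimpleGraph.fromEdgeSet
        (Set.range fun l : Fin n => s(l.succ, p l.succ))).Connected
    rw [SimpleGraph.connected_iff]
    refine ⟨?_, ⟨0⟩⟩
    have key : ∀ k (v : Fin (n + 1)), D v = k →
        (SimpleGraph.fromEdgeSet
          (Set.range fun l : Fin n => s(l.succ, p l.succ))).Reachable v 0 := by
      intro k
      induction k using Nat.strong_induction_on with
      | _ k ih =>
        intro v hv
        by_cases h0 : v = 0
        · subst h0
          exact SimpleGraph.Reachable.refl 0
        · obtain ⟨l, hl⟩ := Fin.exists_succ_eq_of_ne_zero h0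
          have hmem : s(v, p v) ∈
              (Set.range fun l : Fin n => s(l.succ, p l.succ)) := ⟨l, by subst hl; rfl⟩
          have hne : v ≠ p v := by
            have := hD v h0
            intro h
            rw [← h] at this
            omega
          have hadj' : (SimpleGraph.fromEdgeSet
              (Set.range fun l : Fin n => s(l.succ, p l.succ))).Adj v (p v) := by
            rw [SimpleGraph.fromEdgeSet_adj]
            exact ⟨hmem, hne⟩
          have hdp : D (p v) < k := by
            have := hD v h0
            omega
          exact hadj'.reachable.trans (ih _ hdp _ rfl)
    intro u v
    exact (key _ u rfl).trans (key _ v rfl).symm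
  · show Complex.exp (I * (α : ℂ)) •
        (List.ofFn fun l : Fin n =>
          NormedSpace.exp ((-(I * ((T l.succ : ℝ) : ℂ))) • Hz l.succ (p l.succ))).prod =
        Matrix.diagonal fun j => Complex.exp (I * (φ j : ℂ))
    have hfac : ∀ l : Fin n,
        NormedSpace.exp ((-(I * ((T l.succ : ℝ) : ℂ))) • Hz l.succ (p l.succ)) =
          Matrix.diagonal (fun i => Complex.exp ((-(I * ((T l.succ : ℝ) : ℂ))) *
            ((if i = l.succ then (1 : ℂ) else 0) - (if i = p l.succ then 1 else 0)))) := by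
      intro l
      rw [Hz_diagonal, ← Matrix.diagonal_smul, Matrix.exp_diagonal]
      refine congrArg Matrix.diagonal (funext fun i => ?_)
      rw [Pi.coe_exp, Pi.smul_apply, smul_eq_mul, ← Complex.exp_eq_exp_ℂ]
    simp only [hfac]
    have hmap : (List.ofFn fun l : Fin n =>
        Matrix.diagonal (fun i => Complex.exp ((-(I * ((T l.succ : ℝ) : ℂ))) *
          ((if i = l.succ then (1 : ℂ) else 0) - (if i = p l.succ then 1 else 0))))) =
        (List.ofFn fun l : Fin n => (fun i => Complex.exp ((-(I * ((T l.succ : ℝ) : ℂ))) *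
          ((if i = l.succ then (1 : ℂ) else 0) -
            (if i = p l.succ then 1 else 0))))).map Matrix.diagonal := by
      rw [List.map_ofFn]
      rfl
    rw [hmap, prod_map_diagonal]
    simp only [List.map_ofFn, Function.comp_def, List.prod_ofFn]
    rw [← Matrix.diagonal_smul]
    refine congrArg Matrix.diagonal (funext fun j => ?_)
    simp only [Pi.smul_apply, smul_eq_mul]
    rw [← Complex.exp_sum, ← Complex.exp_add]
    congr 1
    have hterm : ∀ l : Fin n,
        (-(I * ((T l.succ : ℝ) : ℂ))) *
          ((if j = l.succ then (1 : ℂ) else 0) - (if j = p l.succ then 1 else 0)) =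
        I * ((-(T l.succ * ((if j = l.succ then (1 : ℝ) else 0) -
          (if j = p l.succ then 1 else 0))) : ℝ) : ℂ) := by
      intro l
      split_ifs <;> push_cast <;> ring
    rw [Finset.sum_congr rfl fun l _ => hterm l, ← Finset.mul_sum, ← mul_add]
    congr 1
    rw [← Complex.ofReal_sum, ← Complex.ofReal_add, Complex.ofReal_inj]
    have hs1 : ∑ v : Fin (n + 1), (if j = v then T v else 0) = T j := by
      simp [Finset.sum_ite_eq]
    have hs2 : ∑ v : Fin (n + 1), (if j = p v then T v else 0) = C j := by
      simp only [hCdef]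
      rw [Finset.sum_filter]
      refine Finset.sum_congr rfl fun v _ => ?_
      by_cases h : p v = j
      · rw [if_pos h, if_pos h.symm]
      · rw [if_neg h, if_neg fun hh => h hh.symm]
    have hFz : ∀ v : Fin (n + 1),
        -(T v * ((if j = v then (1 : ℝ) else 0) - (if j = p v then 1 else 0))) =
        (if j = p v then T v else 0) - (if j = v then T v else 0) := by
      intro v
      split_ifs <;> ring
    calc α + ∑ l : Fin n, -(T l.succ * ((if j = l.succ then (1 : ℝ) else 0) -
          (if j = p l.succ then 1 else 0)))
        = α + ∑ v : Fin (n + 1), -(T v * ((if j = v then (1 : ℝ) else 0) -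
            (if j = p v then 1 else 0))) := by
          rw [Fin.sum_univ_succ, hT0]
          ring
      _ = α + ∑ v : Fin (n + 1), ((if j = p v then T v else 0) -
            (if j = v then T v else 0)) := by
          rw [Finset.sum_congr rfl fun v _ => hFz v]
      _ = α + (C j - T j) := by rw [Finset.sum_sub_distrib, hs1, hs2]
      _ = φ j := by
          have := hsys j
          linarith
end

section
/- For any w ∈ SU(2) there exist matrices a, b, c ∈ SU(2) such that w = a σ^x b σ^x c and a b c = I. -/
open Matrix Complex

def σx : Matrix (Fin 2) (Fin 2) ℂ := !![0, 1; 1, 0]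

private lemma su2_helper (w : Matrix (Fin 2) (Fin 2) ℂ) (p q ν : ℂ)
    (hn : p * (starRingEnd ℂ) p + q * (starRingEnd ℂ) q = 1)
    (hν : ν * (starRingEnd ℂ) ν = 1)
    (h00 : w 0 0 = p * (starRingEnd ℂ) p * ν ^ 2 + q * (starRingEnd ℂ) q * ((starRingEnd ℂ) ν) ^ 2)
    (h01 : w 0 1 = p * (starRingEnd ℂ) q * (ν ^ 2 - ((starRingEnd ℂ) ν) ^ 2))
    (h10 : w 1 0 = (starRingEnd ℂ) p * q * (ν ^ 2 - ((starRingEnd ℂ) ν) ^ 2))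
    (h11 : w 1 1 = q * (starRingEnd ℂ) q * ν ^ 2 + p * (starRingEnd ℂ) p * ((starRingEnd ℂ) ν) ^ 2) :
    ∃ a b c : Matrix (Fin 2) (Fin 2) ℂ,
      a ∈ Matrix.specialUnitaryGroup (Fin 2) ℂ ∧
      b ∈ Matrix.specialUnitaryGroup (Fin 2) ℂ ∧
      c ∈ Matrix.specialUnitaryGroup (Fin 2) ℂ ∧
      w = a * σx * b * σx * c ∧ a * b * c = 1 := by
  refine ⟨!![p, -(starRingEnd ℂ) q; q, (starRingEnd ℂ) p],
    !![(starRingEnd ℂ) ν, 0; 0, ν],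
    !![ν * (starRingEnd ℂ) p, ν * (starRingEnd ℂ) q; -(starRingEnd ℂ) ν * q, (starRingEnd ℂ) ν * p],
    ?_, ?_, ?_, ?_, ?_⟩
  · rw [mem_specialUnitaryGroup_iff, mem_unitaryGroup_iff]
    constructor
    · ext i j
      fin_cases i <;> fin_cases j <;>
        simp [Matrix.mul_apply, Fin.sum_univ_two, Matrix.star_apply, one_apply] <;>
        (first | ring1 | linear_combination hn | linear_combination -hn | linear_combination hν | linear_combination -hν | linear_combination ν * (starRingEnd ℂ) ν * hn + hν | linear_combination -(ν * (starRingEnd ℂ) ν * hn) - hν)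
    · simp [Matrix.det_fin_two]; (first | ring1 | linear_combination hn | linear_combination -hn | linear_combination hν | linear_combination -hν | linear_combination ν * (starRingEnd ℂ) ν * hn + hν | linear_combination -(ν * (starRingEnd ℂ) ν * hn) - hν)
  · rw [mem_specialUnitaryGroup_iff, mem_unitaryGroup_iff]
    constructor
    · ext i j
      fin_cases i <;> fin_cases j <;>
        simp [Matrix.mul_apply, Fin.sum_univ_two, Matrix.star_apply, one_apply] <;>
        (first | ring1 | linear_combination hn | linear_combination -hn | linear_combination hν | linear_combination -hν | linear_combination ν * (starRingEnd ℂ) ν * hn + hν | linear_combination -(ν * (starRingEnd ℂ) ν * hn) - hν)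
    · simp [Matrix.det_fin_two]; (first | ring1 | linear_combination hn | linear_combination -hn | linear_combination hν | linear_combination -hν | linear_combination ν * (starRingEnd ℂ) ν * hn + hν | linear_combination -(ν * (starRingEnd ℂ) ν * hn) - hν)
  · rw [mem_specialUnitaryGroup_iff, mem_unitaryGroup_iff]
    constructor
    · ext i j
      fin_cases i <;> fin_cases j <;>
        simp [Matrix.mul_apply, Fin.sum_univ_two, Matrix.star_apply, one_apply] <;>
        (first | ring1 | linear_combination hn | linear_combination -hn | linear_combination hν | linear_combination -hν | linear_combination ν * (starRingEnd ℂ) ν * hn + hν | linear_combination -(ν * (starRingEnd ℂ) ν * hn) - hν)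
    · simp [Matrix.det_fin_two]; (first | ring1 | linear_combination hn | linear_combination -hn | linear_combination hν | linear_combination -hν | linear_combination ν * (starRingEnd ℂ) ν * hn + hν | linear_combination -(ν * (starRingEnd ℂ) ν * hn) - hν)
  · rw [eta_fin_two w, h00, h01, h10, h11, σx]
    ext i j
    fin_cases i <;> fin_cases j <;>
      simp [Matrix.mul_apply, Fin.sum_univ_two] <;> ring
  · ext i j
    fin_cases i <;> fin_cases j <;>
      simp [Matrix.mul_apply, Fin.sum_univ_two, one_apply] <;>
      (first | ring1 | linear_combination hn | linear_combination -hn | linear_combination hν | linear_combination -hν | linear_combination ν * (starRingEnd ℂ) ν * hn + hν | linear_combination -(ν * (starRingEnd ℂ) ν * hn) - hν)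

private lemma su2_entries (w : Matrix (Fin 2) (Fin 2) ℂ)
    (hw : w ∈ Matrix.specialUnitaryGroup (Fin 2) ℂ) :
    w 1 1 = (starRingEnd ℂ) (w 0 0) ∧ w 0 1 = -(starRingEnd ℂ) (w 1 0) ∧
    Complex.normSq (w 0 0) + Complex.normSq (w 1 0) = 1 := by
  rw [mem_specialUnitaryGroup_iff, mem_unitaryGroup_iff] at hw
  obtain ⟨hu, hdet⟩ := hw
  have hinv : w⁻¹ = star w := Matrix.inv_eq_right_inv hu
  have hadj : star w = adjugate w := by
    rw [← hinv, Matrix.inv_def, hdet]; simp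
  have h11 : w 1 1 = (starRingEnd ℂ) (w 0 0) := by
    have := congrFun (congrFun hadj 0) 0
    simp [Matrix.star_apply, Matrix.adjugate_fin_two] at this
    exact this.symm
  have h01 : w 0 1 = -(starRingEnd ℂ) (w 1 0) := by
    have := congrFun (congrFun hadj 0) 1
    simp [Matrix.star_apply, Matrix.adjugate_fin_two] at this
    rw [this]; ring
  refine ⟨h11, h01, ?_⟩
  have hd : w 0 0 * w 1 1 - w 0 1 * w 1 0 = 1 := by rw [← Matrix.det_fin_two]; exact hdet
  rw [h11, h01] at hd
  have : ((Complex.normSq (w 0 0) + Complex.normSq (w 1 0) : ℝ) : ℂ) = 1 := by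
    push_cast
    rw [← Complex.mul_conj, ← Complex.mul_conj]
    linear_combination hd
  exact_mod_cast this

/-- Barenco et al., Lemma 5.1: for any w ∈ SU(2) there exist a, b, c ∈ SU(2)
with w = a σ^x b σ^x c and a b c = I. -/
theorem su2_controlled_factorization (w : Matrix (Fin 2) (Fin 2) ℂ)
    (hw : w ∈ Matrix.specialUnitaryGroup (Fin 2) ℂ) :
    ∃ a b c : Matrix (Fin 2) (Fin 2) ℂ,
      a ∈ Matrix.specialUnitaryGroup (Fin 2) ℂ ∧
      b ∈ Matrix.specialUnitaryGroup (Fin 2) ℂ ∧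
      c ∈ Matrix.specialUnitaryGroup (Fin 2) ℂ ∧
      w = a * σx * b * σx * c ∧ a * b * c = 1 := by
  obtain ⟨hw11, hw01, hns⟩ := su2_entries w hw
  set α := w 0 0 with hα_def
  set β := w 1 0 with hβ_def
  set x := α.re with hx_def
  set y := α.im with hy_def
  have hnsα : Complex.normSq α = x^2 + y^2 := by
    rw [Complex.normSq_apply]; ring
  have hxy : x^2 + y^2 + Complex.normSq β = 1 := by rw [← hnsα]; exact hns
  have hx2 : x^2 ≤ 1 := by nlinarith [Complex.normSq_nonneg β, sq_nonneg y]
  have hxle : x ≤ 1 := by nlinarith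
  have hxge : -1 ≤ x := by nlinarith
  set s := Real.sqrt (1 - x^2) with hs_def
  have hs0 : 0 ≤ s := Real.sqrt_nonneg _
  have hs_sq : s^2 = 1 - x^2 := Real.sq_sqrt (by linarith)
  have hnsβ : Complex.normSq β = s^2 - y^2 := by rw [hs_sq]; linarith
  have hy2 : y^2 ≤ s^2 := by nlinarith [Complex.normSq_nonneg β]
  have hsy : 0 ≤ s + y := by nlinarith
  set u := Real.sqrt ((1+x)/2) with hu_def
  set v := Real.sqrt ((1-x)/2) with hv_def
  have hu_sq : u^2 = (1+x)/2 := Real.sq_sqrt (by linarith)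
  have hv_sq : v^2 = (1-x)/2 := Real.sq_sqrt (by linarith)
  have huv : 2*(u*v) = s := by
    have h1 : (2*(u*v))^2 = s^2 := by rw [mul_pow, mul_pow, hu_sq, hv_sq, hs_sq]; ring
    have h2 : 0 ≤ 2*(u*v) := by positivity
    calc 2*(u*v) = Real.sqrt ((2*(u*v))^2) := (Real.sqrt_sq h2).symm
    _ = Real.sqrt (s^2) := by rw [h1]
    _ = s := Real.sqrt_sq hs0
  set ν : ℂ := (u:ℂ) + (v:ℂ) * Complex.I with hν_def
  have hconjν : (starRingEnd ℂ) ν = (u:ℂ) - (v:ℂ) * Complex.I := by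
    simp [hν_def, map_add, _root_.map_mul, Complex.conj_ofReal, Complex.conj_I]; ring
  have cu : ((u:ℂ))^2 - ((v:ℂ))^2 = (x:ℂ) := by
    have : u^2 - v^2 = x := by rw [hu_sq, hv_sq]; ring
    exact_mod_cast congrArg (Complex.ofReal) this
  have cuv : 2*((u:ℂ)*(v:ℂ)) = (s:ℂ) := by exact_mod_cast congrArg Complex.ofReal huv
  have cuv1 : ((u:ℂ))^2 + ((v:ℂ))^2 = 1 := by
    have : u^2 + v^2 = 1 := by rw [hu_sq, hv_sq]; ring
    exact_mod_cast congrArg Complex.ofReal this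
  have hν1 : ν * (starRingEnd ℂ) ν = 1 := by
    rw [hconjν, hν_def]; linear_combination cuv1 - ((v:ℂ))^2 * Complex.I_sq
  have hN : ν^2 = (x:ℂ) + (s:ℂ) * Complex.I := by
    rw [hν_def]; linear_combination cu + Complex.I * cuv + ((v:ℂ))^2 * Complex.I_sq
  have hNc : ((starRingEnd ℂ) ν)^2 = (x:ℂ) - (s:ℂ) * Complex.I := by
    rw [hconjν]; linear_combination cu - Complex.I * cuv + ((v:ℂ))^2 * Complex.I_sq
  have hα : α = (x:ℂ) + (y:ℂ) * Complex.I := (Complex.re_add_im α).symm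
  have hαc : (starRingEnd ℂ) α = (x:ℂ) - (y:ℂ) * Complex.I := by
    rw [hα]; simp [map_add, _root_.map_mul, Complex.conj_ofReal, Complex.conj_I]; ring
  rcases eq_or_lt_of_le hsy with hsy0 | hsy0
  -- Case C : s + y = 0
  · have hy : y = -s := by linarith
    have hβ0 : β = 0 := by
      have : Complex.normSq β = 0 := by rw [hnsβ, hy]; ring
      exact Complex.normSq_eq_zero.mp this
    refine su2_helper w 0 1 ν (by simp) hν1 ?_ ?_ ?_ ?_
    · simp only [map_zero, _root_.map_one, zero_mul, mul_zero, one_mul, mul_one, zero_add]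
      rw [show w 0 0 = α from rfl, hα, hNc, hy]; push_cast; ring
    · rw [hw01, hβ0]; simp
    · rw [show w 1 0 = β from rfl, hβ0]; simp
    · simp only [map_zero, _root_.map_one, zero_mul, mul_zero, one_mul, mul_one, add_zero]
      rw [hw11, hαc, hN, hy]; push_cast; ring
  -- Case B : s + y > 0
  · have hspos : 0 < s := by nlinarith [hy2, hs0, sq_nonneg (s - y)]
    set r := Real.sqrt ((s+y)/(2*s)) with hr_def
    have hr_sq : r^2 = (s+y)/(2*s) := Real.sq_sqrt (by positivity)
    have hrpos : 0 < r := Real.sqrt_pos.mpr (by positivity)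
    have cr : ((r:ℂ))^2 * (2*(s:ℂ)) = (s:ℂ) + (y:ℂ) := by
      have : r^2*(2*s) = s+y := by rw [hr_sq]; field_simp
      exact_mod_cast congrArg Complex.ofReal this
    have cβ : β * (starRingEnd ℂ) β = (s:ℂ)^2 - (y:ℂ)^2 := by
      rw [Complex.mul_conj, hnsβ]; push_cast; ring
    have hs0' : (s:ℂ) ≠ 0 := Complex.ofReal_ne_zero.mpr hspos.ne'
    have hr0' : (r:ℂ) ≠ 0 := Complex.ofReal_ne_zero.mpr hrpos.ne'
    set q : ℂ := -(Complex.I * β) / (2*(s:ℂ)*(r:ℂ)) with hq_def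
    have hqc : (starRingEnd ℂ) q = Complex.I * (starRingEnd ℂ) β / (2*(s:ℂ)*(r:ℂ)) := by
      rw [hq_def]; simp [map_div₀, map_neg, _root_.map_mul, Complex.conj_ofReal, Complex.conj_I, map_ofNat]
    have hn' : (r:ℂ) * (r:ℂ) + q * (starRingEnd ℂ) q = 1 := by
      rw [hqc, hq_def]; field_simp
      linear_combination (2*(s:ℂ)*(r:ℂ)^2 + (y:ℂ) - (s:ℂ)) * cr + cβ - β * (starRingEnd ℂ) β * Complex.I_sq
    have L2 : (s:ℂ) * ((r:ℂ)*(r:ℂ) - q * (starRingEnd ℂ) q) = (y:ℂ) := by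
      rw [hqc, hq_def]; field_simp
      linear_combination (2*(s:ℂ)*(r:ℂ)^2 + (s:ℂ) + (y:ℂ) - 2*(y:ℂ)) * cr - cβ + β * (starRingEnd ℂ) β * Complex.I_sq
    have L3 : 2*(s:ℂ)*((r:ℂ) * (starRingEnd ℂ) q) = Complex.I * (starRingEnd ℂ) β := by
      rw [hqc]; field_simp
    have L4 : 2*(s:ℂ)*((r:ℂ) * q) = -(Complex.I * β) := by
      rw [hq_def]; field_simp
    have hcr : (starRingEnd ℂ) ((r:ℂ)) = (r:ℂ) := Complex.conj_ofReal r
    refine su2_helper w (r:ℂ) q ν ?_ hν1 ?_ ?_ ?_ ?_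
    · rw [hcr]; exact hn'
    · rw [hcr, show w 0 0 = α from rfl]
      linear_combination hα - ((r:ℂ)*(r:ℂ)) * hN - (q * (starRingEnd ℂ) q) * hNc - (x:ℂ) * hn' - Complex.I * L2
    · linear_combination hw01 - ((r:ℂ) * (starRingEnd ℂ) q) * hN + ((r:ℂ) * (starRingEnd ℂ) q) * hNc - Complex.I * L3 - (starRingEnd ℂ) β * Complex.I_sq
    · rw [hcr]
      linear_combination - ((r:ℂ) * q) * hN + ((r:ℂ) * q) * hNc - Complex.I * L4 + β * Complex.I_sq
    · rw [hcr]
      linear_combination hw11 + hαc - (q * (starRingEnd ℂ) q) * hN - ((r:ℂ)*(r:ℂ)) * hNc - (x:ℂ) * hn' + Complex.I * L2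
end

section
/- The diagonal two-qudit Hamiltonian H' = ∑_{m,n} Ω_{mn} |mn⟩⟨mn| generates, for each time t, the unitary U(t) = ∑_{m,n} e^{−iΩ_{mn}t}|mn⟩⟨mn|; U(t) is a tensor product of local unitaries (U(t) = A ⊗ B for some diagonal unitaries A, B on ℂ^d) for every t if and only if Ω_{mn} + Ω_{pq} = Ω_{mq} + Ω_{pn} for all m,n,p,q. -/
open Matrix Complex

/-- The diagonal unitary generated at time t by H' = ∑ Ω_{mn}|mn⟩⟨mn| is a
tensor product of diagonal local unitaries for every t iff
Ω_{mn} + Ω_{pq} = Ω_{mq} + Ω_{pn} for all m,n,p,q. -/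
theorem diagonal_hamiltonian_nonentangling_iff (d : ℕ) (Ω : Fin d → Fin d → ℝ) :
    (∀ t : ℝ, ∃ A B : Fin d → ℂ,
        (∀ m, ‖A m‖ = 1) ∧ (∀ n, ‖B n‖ = 1) ∧
        (Matrix.diagonal fun p : Fin d × Fin d =>
            Complex.exp (-(I * (Ω p.1 p.2 : ℂ) * (t : ℂ)))) =
          Matrix.diagonal fun p : Fin d × Fin d => A p.1 * B p.2) ↔
      ∀ m n p q : Fin d, Ω m n + Ω p q = Ω m q + Ω p n := by
  constructor
  · intro h m n p q
    have key : ∀ t : ℝ,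
        Complex.exp (-(I * ((Ω m n + Ω p q : ℝ) : ℂ) * t)) =
          Complex.exp (-(I * ((Ω m q + Ω p n : ℝ) : ℂ) * t)) := by
      intro t
      obtain ⟨A, B, hA, hB, hd⟩ := h t
      have entry : ∀ a b : Fin d,
          Complex.exp (-(I * (Ω a b : ℂ) * t)) = A a * B b := by
        intro a b
        have := congrFun (congrFun hd (a, b)) (a, b)
        simpa [Matrix.diagonal_apply_eq] using this
      have comb : ∀ a b : ℝ,
          Complex.exp (-(I * ((a + b : ℝ) : ℂ) * t)) =
            Complex.exp (-(I * (a : ℂ) * t)) * Complex.exp (-(I * (b : ℂ) * t)) := by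
        intro a b
        rw [← Complex.exp_add]
        congr 1
        push_cast
        ring
      rw [comb, comb, entry m n, entry p q, entry m q, entry p n]
      ring
    by_contra hne
    set s : ℝ := Ω m n + Ω p q with hs
    set s' : ℝ := Ω m q + Ω p n with hs'
    have hss : s' - s ≠ 0 := fun hc => hne (by linarith [sub_eq_zero.mp hc])
    have ht := key (Real.pi / (s' - s))
    have h1 : Complex.exp (-(I * (s : ℂ) * ((Real.pi / (s' - s) : ℝ) : ℂ))
        - -(I * (s' : ℂ) * ((Real.pi / (s' - s) : ℝ) : ℂ))) = 1 := by
      rw [Complex.exp_sub, ht, div_self (Complex.exp_ne_zero _)]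
    have harg : -(I * (s : ℂ) * ((Real.pi / (s' - s) : ℝ) : ℂ))
        - -(I * (s' : ℂ) * ((Real.pi / (s' - s) : ℝ) : ℂ)) = Real.pi * I := by
      have hc : ((s' : ℂ) - s) ≠ 0 := by
        simpa using (Complex.ofReal_ne_zero.mpr hss)
      push_cast
      field_simp
      ring
    rw [harg, Complex.exp_pi_mul_I] at h1
    norm_num at h1
  · intro hΩ t
    rcases Nat.eq_zero_or_pos d with hd | hd
    · subst hd
      exact ⟨fun _ => 1, fun _ => 1, fun m => m.elim0, fun n => n.elim0, by
        ext p q; exact p.1.elim0⟩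
    · set z : Fin d := ⟨0, hd⟩
      have habs : ∀ x : ℝ, ‖Complex.exp (-(I * (x : ℂ) * t))‖ = 1 := by
        intro x
        have : -(I * (x : ℂ) * t) = ((-(x * t) : ℝ) : ℂ) * I := by push_cast; ring
        rw [this, Complex.norm_exp_ofReal_mul_I]
      refine ⟨fun m => Complex.exp (-(I * (Ω m z : ℂ) * t)),
        fun n => Complex.exp (-(I * ((Ω z n - Ω z z : ℝ) : ℂ) * t)),
        fun m => habs _, fun n => habs _, ?_⟩
      refine congrArg Matrix.diagonal (funext fun p => ?_)
      show Complex.exp _ = Complex.exp _ * Complex.exp _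
      rw [← Complex.exp_add]
      congr 1
      have hr : (Ω p.1 p.2 : ℝ) = Ω p.1 z + (Ω z p.2 - Ω z z) := by
        linarith [hΩ p.1 p.2 z z]
      rw [hr]
      push_cast
      ring
end

section
/- Let G be a connected graph on d vertices and let d(j,k) denote graph distance. Then for any edge-allowed Givens gate set, any Givens rotation on an arbitrary plane (j,k) can be realized as a product of at most 2·d(j,k) − 1 Givens rotations on planes that are edges of G (conjugating by swap-like rotations along a shortest path). -/
open Matrix

/-- The swap (permutation) matrix on coordinates `a, b`. -/
noncomputable def swapMat {d : ℕ} (a b : Fin d) : Matrix (Fin d) (Fin d) ℂ :=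
  (Equiv.swap a b).toPEquiv.toMatrix

lemma swapMat_apply {d : ℕ} (a b p q : Fin d) :
    swapMat a b p q = if Equiv.swap a b p = q then 1 else 0 := by
  rw [swapMat, PEquiv.toMatrix_toPEquiv_eq, Matrix.submatrix_apply, Matrix.one_apply, id]

lemma swapMat_mul_self {d : ℕ} (a b : Fin d) :
    swapMat a b * swapMat a b = 1 := by
  ext p q
  rw [Matrix.mul_apply, Matrix.one_apply]
  rw [Finset.sum_eq_single (Equiv.swap a b p)]
  · rw [swapMat_apply, if_pos rfl, one_mul, swapMat_apply, Equiv.swap_apply_self]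
  · intro r _ hr
    rw [swapMat_apply, if_neg (Ne.symm hr), zero_mul]
  · intro hmem
    exact absurd (Finset.mem_univ _) hmem

lemma swapMat_star {d : ℕ} (a b : Fin d) : star (swapMat a b) = swapMat a b := by
  ext p q
  simp only [Matrix.star_apply, swapMat_apply]
  by_cases h : Equiv.swap a b p = q
  · rw [if_pos h, if_pos (by rw [← h, Equiv.swap_apply_self])]
    simp
  · rw [if_neg h, if_neg (fun hh => h (by rw [← hh, Equiv.swap_apply_self]))]
    simp

lemma swapMat_unitary {d : ℕ} (a b : Fin d) :
    swapMat a b ∈ Matrix.unitaryGroup (Fin d) ℂ := by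
  constructor <;> rw [swapMat_star] <;> exact swapMat_mul_self a b

lemma swapMat_isGivens {d : ℕ} (a b : Fin d) : IsGivensOn a b (swapMat a b) := by
  refine ⟨swapMat_unitary a b, fun p q hpq => ?_⟩
  rw [swapMat_apply]
  have hp : Equiv.swap a b p = p ∨ Equiv.swap a b q = q := by
    rcases hpq with h | h <;> [left; right] <;>
      · simp only [Set.mem_insert_iff, Set.mem_singleton_iff, not_or] at h
        exact Equiv.swap_apply_of_ne_of_ne h.1 h.2
  rcases hp with h | h
  · rw [h]
  · by_cases hh : p = q
    · subst hh
      rw [if_pos h, if_pos rfl]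
    · rw [if_neg (fun hc => hh ((Equiv.swap a b).injective (by rw [hc, h]))), if_neg hh]

lemma swap_conj_apply {d : ℕ} (a b : Fin d) (A : Matrix (Fin d) (Fin d) ℂ)
    (p q : Fin d) :
    (swapMat a b * A * swapMat a b) p q = A (Equiv.swap a b p) (Equiv.swap a b q) := by
  rw [swapMat, PEquiv.toMatrix_toPEquiv_mul, PEquiv.mul_toMatrix_toPEquiv]
  simp [Matrix.submatrix_apply, Equiv.symm_swap]

lemma conj_isGivens {d : ℕ} (a b j k : Fin d) (hak : a ≠ k) (hbk : b ≠ k)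
    (A : Matrix (Fin d) (Fin d) ℂ) (hA : IsGivensOn j k A) :
    IsGivensOn (Equiv.swap a b j) k (swapMat a b * A * swapMat a b) := by
  obtain ⟨hu, hid⟩ := hA
  refine ⟨?_, fun p q hpq => ?_⟩
  · exact mul_mem (mul_mem (swapMat_unitary a b) hu) (swapMat_unitary a b)
  · rw [swap_conj_apply]
    set σ := Equiv.swap a b with hσ
    have hσk : σ k = k := Equiv.swap_apply_of_ne_of_ne (Ne.symm hak) (Ne.symm hbk)
    have key : ∀ r : Fin d, r ∉ ({σ j, k} : Set (Fin d)) → σ r ∉ ({j, k} : Set (Fin d)) := by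
      intro r hr
      simp only [Set.mem_insert_iff, Set.mem_singleton_iff, not_or] at hr ⊢
      constructor
      · intro h; exact hr.1 (by rw [← h]; simp [hσ])
      · intro h; exact hr.2 (by rw [← hσk, ← h]; simp [hσ])
    have hval := hid (σ p) (σ q)
      (by rcases hpq with h | h; exacts [Or.inl (key p h), Or.inr (key q h)])
    rw [hval]
    have hiff : (σ p = σ q) ↔ (p = q) := ⟨fun h => σ.injective h, fun h => by rw [h]⟩
    simp [hiff]

theorem givens_aux (d : ℕ) (G : SimpleGraph (Fin d)) (hG : G.Connected) :
    ∀ n : ℕ, ∀ j k : Fin d, j ≠ k → G.dist j k ≤ n →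
    ∀ A : Matrix (Fin d) (Fin d) ℂ, IsGivensOn j k A →
    ∃ L : List (Matrix (Fin d) (Fin d) ℂ),
      L.length ≤ 2 * G.dist j k - 1 ∧
      (∀ B ∈ L, ∃ m n : Fin d, G.Adj m n ∧ IsGivensOn m n B) ∧
      L.prod = A := by
  intro n
  induction n with
  | zero =>
    intro j k hjk hle A hA
    have := hG.pos_dist_of_ne hjk
    omega
  | succ n ih =>
    intro j k hjk hle A hA
    have hpos : 0 < G.dist j k := hG.pos_dist_of_ne hjk
    by_cases hadj : G.Adj j k
    · have h1 : G.dist j k = 1 := SimpleGraph.dist_eq_one_iff_adj.mpr hadj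
      refine ⟨[A], by simp [h1], ?_, by simp⟩
      intro B hB
      simp only [List.mem_singleton] at hB
      exact ⟨j, k, hadj, hB ▸ hA⟩
    · -- dist ≥ 2
      have hd2 : 2 ≤ G.dist j k := by
        by_cases h1 : G.dist j k = 1
        · exact absurd (SimpleGraph.dist_eq_one_iff_adj.mp h1) hadj
        · omega
      obtain ⟨p, hp⟩ := (hG j k).exists_walk_length_eq_dist
      cases p with
      | nil => simp at hp; omega
      | cons h q =>
        rename_i j'
        simp only [SimpleGraph.Walk.length_cons] at hp
        have hdist' : G.dist j' k ≤ G.dist j k - 1 := by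
          have := SimpleGraph.dist_le q
          omega
        have hj'k : j' ≠ k := by
          intro hEq
          have hw := SimpleGraph.dist_le h.toWalk
          simp only [SimpleGraph.Adj.toWalk, SimpleGraph.Walk.length_cons,
            SimpleGraph.Walk.length_nil] at hw
          rw [hEq] at hw
          omega
        have hjj' : j ≠ j' := h.ne
        have hconj : IsGivensOn j' k (swapMat j j' * A * swapMat j j') := by
          have hc := conj_isGivens j j' j k hjk hj'k A hA
          rwa [Equiv.swap_apply_left] at hc
        obtain ⟨L, hLlen, hLmem, hLprod⟩ :=
          ih j' k hj'k (by omega) (swapMat j j' * A * swapMat j j') hconj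
        refine ⟨swapMat j j' :: (L ++ [swapMat j j']), ?_, ?_, ?_⟩
        · simp only [List.length_cons, List.length_append, List.length_singleton, List.length_nil]
          omega
        · intro B hB
          rcases List.mem_cons.mp hB with rfl | hB'
          · exact ⟨j, j', h, swapMat_isGivens j j'⟩
          · rcases List.mem_append.mp hB' with hB2 | hB2
            · exact hLmem B hB2
            · rcases List.mem_singleton.mp hB2 with rfl
              exact ⟨j, j', h, swapMat_isGivens j j'⟩
        · rw [List.prod_cons, List.prod_append, List.prod_singleton, hLprod,
            show swapMat j j' * (swapMat j j' * A * swapMat j j' * swapMat j j') =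
              (swapMat j j' * swapMat j j') * A * (swapMat j j' * swapMat j j') by
                simp only [mul_assoc],
            swapMat_mul_self, one_mul, mul_one]

/-- In a connected coupling graph, any Givens rotation on an arbitrary plane
(j,k) is a product of at most 2·d(j,k) − 1 Givens rotations on planes which are
edges of the graph. -/
theorem givens_via_path_conjugation (d : ℕ) (G : SimpleGraph (Fin d))
    (hG : G.Connected) (j k : Fin d) (hjk : j ≠ k)
    (A : Matrix (Fin d) (Fin d) ℂ) (hA : IsGivensOn j k A) :
    ∃ L : List (Matrix (Fin d) (Fin d) ℂ),
      L.length ≤ 2 * G.dist j k - 1 ∧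
      (∀ B ∈ L, ∃ m n : Fin d, G.Adj m n ∧ IsGivensOn m n B) ∧
      L.prod = A :=
  givens_aux d G hG (G.dist j k) j k hjk le_rfl A hA
end
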